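/- arXiv:1210.0667 — 3 statements merged into one kernel-verified Lean document; each statement's English description precedes it below -/
import Mathlib

section
/- Suppose A, B ∈ 𝓑(L²(M; dμ)) are positivity preserving. Then 0 ≼ B ≼ A (i.e., A − B is positivity preserving) if and only if |B f| ≤ A |f| μ-a.e. for all f ∈ L²(M; dμ). -/
open MeasureTheory

/-- If `A, B` are bounded positivity preserving operators on `L²(M; dμ)`, then
`0 ≼ B ≼ A` (i.e. `A − B` is positivity preserving) iff `|B f| ≤ A |f|` μ-a.e.
for all `f ∈ L²(M; dμ)`. -/
theorem stmt_5 {α : Type*} [MeasurableSpace α] {μ : Measure α} [SigmaFinite μ]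
    (A B : Lp ℝ 2 μ →L[ℝ] Lp ℝ 2 μ)
    (hA : ∀ f : Lp ℝ 2 μ, 0 ≤ f → 0 ≤ A f)
    (hB : ∀ f : Lp ℝ 2 μ, 0 ≤ f → 0 ≤ B f) :
    (∀ f : Lp ℝ 2 μ, 0 ≤ f → 0 ≤ (A - B) f) ↔ (∀ f : Lp ℝ 2 μ, |B f| ≤ A |f|) := by
  constructor
  · intro h f
    have hp : B f⁺ ≤ A f⁺ := by
      have := h f⁺ (posPart_nonneg f)
      rw [ContinuousLinearMap.sub_apply] at this
      exact sub_nonneg.mp this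
    have hn : B f⁻ ≤ A f⁻ := by
      have := h f⁻ (negPart_nonneg f)
      rw [ContinuousLinearMap.sub_apply] at this
      exact sub_nonneg.mp this
    have hbp : (0 : Lp ℝ 2 μ) ≤ B f⁺ := hB _ (posPart_nonneg f)
    have hbn : (0 : Lp ℝ 2 μ) ≤ B f⁻ := hB _ (negPart_nonneg f)
    calc |B f| = |B f⁺ - B f⁻| := by rw [← map_sub, posPart_sub_negPart]
      _ = |B f⁺ + -(B f⁻)| := by rw [sub_eq_add_neg]
      _ ≤ |B f⁺| + |-(B f⁻)| := abs_add_le _ _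
      _ = |B f⁺| + |B f⁻| := by rw [abs_neg]
      _ = B f⁺ + B f⁻ := by rw [abs_of_nonneg hbp, abs_of_nonneg hbn]
      _ ≤ A f⁺ + A f⁻ := add_le_add hp hn
      _ = A |f| := by rw [← map_add, posPart_add_negPart]
  · intro h f hf
    have h1 := h f
    rw [abs_of_nonneg hf] at h1
    have h2 : B f ≤ A f := le_trans (le_abs_self _) h1
    rw [ContinuousLinearMap.sub_apply]
    exact sub_nonneg.mpr h2
end

section
/- Let A, B ∈ 𝓑(L²(M; dμ)) with 0 ≼ B ≼ A (in the positivity preserving ordering), and suppose A ∈ 𝓑_{2n}(L²(M; dμ)) for some n ∈ ℕ. Then B ∈ 𝓑_{2n}(L²(M; dμ)) and ‖B‖_{𝓑_{2n}} ≤ ‖A‖_{𝓑_{2n}}. -/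
open MeasureTheory ENNReal



open Matrix Finset

section RealLemmas

/-- substochastic Jensen for natural powers -/
lemma jensen_substoch {ι : Type*} (s : Finset ι) (w z : ι → ℝ) (hw : ∀ i ∈ s, 0 ≤ w i)
    (hw1 : ∑ i ∈ s, w i ≤ 1) (hz : ∀ i ∈ s, 0 ≤ z i) {k : ℕ} (hk : 1 ≤ k) :
    (∑ i ∈ s, w i * z i) ^ k ≤ ∑ i ∈ s, w i * z i ^ k := by
  set W := ∑ i ∈ s, w i with hW
  rcases eq_or_lt_of_le (Finset.sum_nonneg hw) with h0 | h0
  · have hz0 : ∀ i ∈ s, w i = 0 := fun i hi =>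
      le_antisymm (by
        have := Finset.single_le_sum hw hi
        rw [← hW] at this; linarith) (hw i hi)
    have h1 : (∑ i ∈ s, w i * z i) = 0 := Finset.sum_eq_zero fun i hi => by rw [hz0 i hi, zero_mul]
    have h2 : (∑ i ∈ s, w i * z i ^ k) = 0 := Finset.sum_eq_zero fun i hi => by
      rw [hz0 i hi, zero_mul]
    rw [h1, h2, zero_pow (by omega)]
  · have key := Real.pow_arith_mean_le_arith_mean_pow s (fun i => w i / W) z
      (fun i hi => div_nonneg (hw i hi) h0.le)
      (by rw [← Finset.sum_div, ← hW, div_self h0.ne']) hz k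
    have hWk : W ^ k ≤ W := by
      calc W ^ k ≤ W ^ 1 := pow_le_pow_of_le_one h0.le hw1 hk
      _ = W := pow_one W
    calc (∑ i ∈ s, w i * z i) ^ k = (W * ∑ i ∈ s, (w i / W) * z i) ^ k := by
          rw [Finset.mul_sum]
          congr 1
          refine Finset.sum_congr rfl fun i hi => ?_
          field_simp
          exact (mul_div_cancel_right₀ _ h0.ne').symm
      _ = W ^ k * (∑ i ∈ s, (w i / W) * z i) ^ k := mul_pow _ _ _
      _ ≤ W ^ k * ∑ i ∈ s, (w i / W) * z i ^ k := by
          refine mul_le_mul_of_nonneg_left key (by positivity)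
      _ = W ^ k / W * ∑ i ∈ s, w i * z i ^ k := by
          rw [Finset.mul_sum, Finset.mul_sum]
          refine Finset.sum_congr rfl fun i hi => ?_
          field_simp
      _ ≤ 1 * ∑ i ∈ s, w i * z i ^ k := by
          refine mul_le_mul_of_nonneg_right ?_ (Finset.sum_nonneg fun i hi =>
            mul_nonneg (hw i hi) (pow_nonneg (hz i hi) _))
          rw [div_le_one h0]
          exact hWk
      _ = _ := one_mul _

/-- pow is Lipschitz on [0, M] -/
lemma pow_le_pow_add_lin {a b M : ℝ} (hb : 0 ≤ b) (hba : b ≤ a) (haM : a ≤ M) (k : ℕ) :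
    a ^ k ≤ b ^ k + k * M ^ (k - 1) * (a - b) := by
  induction k with
  | zero => simp
  | succ k ih =>
    have ha : 0 ≤ a := hb.trans hba
    have hM : 0 ≤ M := ha.trans haM
    have hbM : b ≤ M := hba.trans haM
    rcases Nat.eq_zero_or_pos k with rfl | hk
    · norm_num
    calc a ^ (k+1) = a * a ^ k := by ring
      _ ≤ a * (b ^ k + k * M ^ (k-1) * (a - b)) := by
          refine mul_le_mul_of_nonneg_left ih ha
      _ = a * b ^ k + k * (a * M ^ (k-1)) * (a - b) := by ring
      _ ≤ (b + (a - b)) * b ^ k + k * (M * M ^ (k-1)) * (a - b) := by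
          have h1 : a * M ^ (k-1) ≤ M * M ^ (k-1) :=
            mul_le_mul_of_nonneg_right haM (by positivity)
          have h2 : (0:ℝ) ≤ a - b := sub_nonneg.2 hba
          have h3 : ↑k * (a * M ^ (k - 1)) * (a - b) ≤ ↑k * (M * M ^ (k - 1)) * (a - b) := by
            refine mul_le_mul_of_nonneg_right (mul_le_mul_of_nonneg_left h1 (by positivity)) h2
          nlinarith [pow_nonneg hb k]
      _ = b ^ (k+1) + (a-b) * b ^ k + k * M ^ k * (a - b) := by
          rw [← pow_succ' M (k-1)]
          have : k - 1 + 1 = k := Nat.succ_pred_eq_of_pos hk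
          rw [this]; ring
      _ ≤ b ^ (k+1) + (a-b) * M ^ k + k * M ^ k * (a - b) := by
          have h2 : (0:ℝ) ≤ a - b := sub_nonneg.2 hba
          have : b ^ k ≤ M ^ k := pow_le_pow_left₀ hb hbM k
          nlinarith
      _ = b ^ (k+1) + (↑(k+1)) * M ^ (k+1-1) * (a - b) := by
          simp only [Nat.add_sub_cancel]
          push_cast; ring

/-- Cauchy-Schwarz with square roots -/
lemma sum_mul_le_sqrt_mul_sqrt {ι : Type*} (s : Finset ι) (f g : ι → ℝ) :
    ∑ i ∈ s, f i * g i ≤ Real.sqrt (∑ i ∈ s, f i ^ 2) * Real.sqrt (∑ i ∈ s, g i ^ 2) := by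
  have h := Finset.sum_mul_sq_le_sq_mul_sq s f g
  have h1 : ∑ i ∈ s, f i * g i ≤ |∑ i ∈ s, f i * g i| := le_abs_self _
  refine h1.trans ?_
  rw [← Real.sqrt_sq_eq_abs, ← Real.sqrt_mul (Finset.sum_nonneg fun i _ => sq_nonneg _)]
  exact Real.sqrt_le_sqrt h

end RealLemmas
open Matrix Finset

section MatrixPart

variable {m : ℕ}

lemma dot_self_nonneg (x : Fin m → ℝ) : 0 ≤ x ⬝ᵥ x :=
  Finset.sum_nonneg fun i _ => mul_self_nonneg _

lemma dot_sum_right {ι : Type*} (s : Finset ι) (y : Fin m → ℝ) (g : ι → Fin m → ℝ) :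
    y ⬝ᵥ (∑ k ∈ s, g k) = ∑ k ∈ s, y ⬝ᵥ g k := by
  simp only [dotProduct, Finset.sum_apply, Finset.mul_sum]
  exact Finset.sum_comm

lemma dot_sum_left {ι : Type*} (s : Finset ι) (y : Fin m → ℝ) (g : ι → Fin m → ℝ) :
    (∑ k ∈ s, g k) ⬝ᵥ y = ∑ k ∈ s, g k ⬝ᵥ y := by
  rw [dotProduct_comm, dot_sum_right]
  exact Finset.sum_congr rfl fun k _ => dotProduct_comm _ _

lemma bessel_dot {ι : Type*} (s : Finset ι) (w : ι → Fin m → ℝ)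
    (horth : ∀ k ∈ s, ∀ l ∈ s, k ≠ l → w k ⬝ᵥ w l = 0)
    (hnorm : ∀ k ∈ s, w k ⬝ᵥ w k ≤ 1)
    (y : Fin m → ℝ) : ∑ k ∈ s, (w k ⬝ᵥ y) ^ 2 ≤ y ⬝ᵥ y := by
  classical
  set c : ι → ℝ := fun k => w k ⬝ᵥ y with hc
  have hz := dot_self_nonneg (y - ∑ k ∈ s, c k • w k)
  have e1 : y ⬝ᵥ (∑ k ∈ s, c k • w k) = ∑ k ∈ s, c k ^ 2 := by
    rw [dot_sum_right]
    refine Finset.sum_congr rfl fun k hk => ?_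
    rw [dotProduct_smul, smul_eq_mul, dotProduct_comm]
    ring
  have e2 : (∑ k ∈ s, c k • w k) ⬝ᵥ y = ∑ k ∈ s, c k ^ 2 := by
    rw [dot_sum_left]
    refine Finset.sum_congr rfl fun k hk => ?_
    rw [smul_dotProduct, smul_eq_mul]
    ring
  have e3 : (∑ k ∈ s, c k • w k) ⬝ᵥ (∑ k ∈ s, c k • w k) = ∑ k ∈ s, c k ^ 2 * (w k ⬝ᵥ w k) := by
    rw [dot_sum_left]
    refine Finset.sum_congr rfl fun k hk => ?_
    rw [smul_dotProduct, dot_sum_right]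
    rw [Finset.sum_eq_single k (fun l hl hlk => by
      rw [dotProduct_smul, horth k hk l hl (Ne.symm hlk), smul_zero]) (fun h => absurd hk h)]
    rw [dotProduct_smul]
    simp only [smul_eq_mul]; ring
  have expand : (y - ∑ k ∈ s, c k • w k) ⬝ᵥ (y - ∑ k ∈ s, c k • w k)
      = y ⬝ᵥ y - 2 * ∑ k ∈ s, c k ^ 2 + ∑ k ∈ s, c k ^ 2 * (w k ⬝ᵥ w k) := by
    rw [sub_dotProduct, dotProduct_sub, dotProduct_sub, e1, e2, e3]
    ring
  have hT : ∑ k ∈ s, c k ^ 2 * (w k ⬝ᵥ w k) ≤ ∑ k ∈ s, c k ^ 2 := by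
    refine Finset.sum_le_sum fun k hk => ?_
    calc c k ^ 2 * (w k ⬝ᵥ w k) ≤ c k ^ 2 * 1 :=
        mul_le_mul_of_nonneg_left (hnorm k hk) (sq_nonneg _)
      _ = c k ^ 2 := mul_one _
  rw [expand] at hz
  linarith

lemma euclid_inner_dot (x y : EuclideanSpace ℝ (Fin m)) :
    (inner ℝ x y : ℝ) = (⇑x) ⬝ᵥ (⇑y) := by
  simp [PiLp.inner_apply, RCLike.inner_apply, dotProduct, mul_comm]

lemma svd_exists (β : Matrix (Fin m) (Fin m) ℝ) :
    ∃ (σ : Fin m → ℝ) (u v : Fin m → (Fin m → ℝ)),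
      (∀ k, 0 ≤ σ k) ∧
      (∀ k l, v k ⬝ᵥ v l = if k = l then 1 else 0) ∧
      (∀ k l, u k ⬝ᵥ u l = if k = l then (if σ k = 0 then 0 else 1) else 0) ∧
      (∀ x : Fin m → ℝ, β *ᵥ x = ∑ k, (σ k * (v k ⬝ᵥ x)) • u k) ∧
      (∀ n : ℕ, ((βᴴ * β) ^ n).trace = ∑ k, σ k ^ (2 * n)) := by
  classical
  have hPSD := Matrix.posSemidef_conjTranspose_mul_self β
  set G := βᴴ * β with hGdef
  have hG : G.IsHermitian := hPSD.1
  set d : Fin m → ℝ := hG.eigenvalues with hd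
  have hdpos : ∀ k, 0 ≤ d k := fun k => hPSD.eigenvalues_nonneg k
  set v : Fin m → (Fin m → ℝ) := fun k => ⇑(hG.eigenvectorBasis k) with hv
  have hvorth : ∀ k l, v k ⬝ᵥ v l = if k = l then 1 else 0 := by
    intro k l
    have := hG.eigenvectorBasis.orthonormal
    rw [orthonormal_iff_ite] at this
    rw [← euclid_inner_dot]
    exact this k l
  have hGv : ∀ k, G *ᵥ v k = d k • v k := fun k => hG.mulVec_eigenvectorBasis k
  have hct : βᴴ = βᵀ := by
    ext i j; simp [conjTranspose_apply]
  have key : ∀ k l, (β *ᵥ v k) ⬝ᵥ (β *ᵥ v l) = if k = l then d k else 0 := by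
    intro k l
    have h1 : (β *ᵥ v k) ⬝ᵥ (β *ᵥ v l) = v k ⬝ᵥ (G *ᵥ v l) := by
      rw [hGdef, hct, ← mulVec_mulVec]
      conv_rhs => rw [dotProduct_mulVec, vecMul_transpose]
    rw [h1, hGv l, dotProduct_smul, smul_eq_mul, hvorth k l]
    by_cases h : k = l
    · subst h; simp
    · simp [h]
  set σ : Fin m → ℝ := fun k => Real.sqrt (d k) with hσ
  have hσ0 : ∀ k, 0 ≤ σ k := fun k => Real.sqrt_nonneg _
  have hσd : ∀ k, σ k ^ 2 = d k := fun k => Real.sq_sqrt (hdpos k)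
  have hσzero : ∀ k, σ k = 0 ↔ d k = 0 := by
    intro k
    constructor
    · intro h; rw [← hσd k, h]; ring
    · intro h; rw [hσ]; simp [h]
  set u : Fin m → (Fin m → ℝ) := fun k => if d k = 0 then 0 else (σ k)⁻¹ • (β *ᵥ v k) with hu
  have hβv0 : ∀ k, d k = 0 → β *ᵥ v k = 0 := by
    intro k h
    have := key k k
    simp only [if_pos rfl, h] at this
    exact dotProduct_self_eq_zero.mp this
  have hβveq : ∀ k, β *ᵥ v k = σ k • u k := by
    intro k
    by_cases h : d k = 0
    · rw [hβv0 k h, hu]; simp [h]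
    · have hσne : σ k ≠ 0 := fun hc => h ((hσzero k).1 hc)
      rw [hu]; simp only [if_neg h, smul_smul, mul_inv_cancel₀ hσne, one_smul]
  have huorth : ∀ k l, u k ⬝ᵥ u l = if k = l then (if σ k = 0 then 0 else 1) else 0 := by
    intro k l
    by_cases hk : d k = 0
    · have : u k = 0 := by rw [hu]; simp [hk]
      rw [this, zero_dotProduct]
      have : σ k = 0 := (hσzero k).2 hk
      simp [this]
    · by_cases hl : d l = 0
      · have : u l = 0 := by rw [hu]; simp [hl]
        rw [this, dotProduct_zero]
        by_cases hkl : k = l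
        · subst hkl; exact absurd hl hk
        · simp [hkl]
      · have hσk : σ k ≠ 0 := fun hc => hk ((hσzero k).1 hc)
        have hσl : σ l ≠ 0 := fun hc => hl ((hσzero l).1 hc)
        rw [hu]
        simp only [if_neg hk, if_neg hl, smul_dotProduct, dotProduct_smul, smul_eq_mul]
        rw [key k l]
        by_cases hkl : k = l
        · subst hkl
          rw [if_pos rfl, if_pos rfl, if_neg hσk]
          field_simp
          rw [← hσd k]
        · simp [hkl]
  -- completeness
  have hcomplete : ∀ i j, ∑ k, v k i * v k j = if i = j then 1 else 0 := by
    intro i j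
    have hmem := (hG.eigenvectorUnitary).2
    rw [Matrix.mem_unitaryGroup_iff] at hmem
    have h2 := congrFun (congrFun hmem i) j
    rw [Matrix.mul_apply, Matrix.one_apply] at h2
    rw [← h2]
    refine Finset.sum_congr rfl fun k _ => ?_
    simp [Matrix.star_apply, Matrix.IsHermitian.eigenvectorUnitary_apply, hv]
  have hrepr : ∀ x : Fin m → ℝ, ∑ k, (v k ⬝ᵥ x) • v k = x := by
    intro x
    funext i
    rw [Finset.sum_apply]
    simp only [Pi.smul_apply, smul_eq_mul, dotProduct]
    calc ∑ k, (∑ j, v k j * x j) * v k i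
        = ∑ k, ∑ j, v k j * x j * v k i := Finset.sum_congr rfl fun k _ => Finset.sum_mul _ _ _
      _ = ∑ j, ∑ k, v k j * x j * v k i := Finset.sum_comm
      _ = ∑ j, (∑ k, v k i * v k j) * x j := by
          refine Finset.sum_congr rfl fun j _ => ?_
          rw [Finset.sum_mul]
          refine Finset.sum_congr rfl fun k _ => by ring
      _ = x i := by
          rw [Finset.sum_eq_single i (fun j _ hji => by rw [hcomplete i j, if_neg (Ne.symm hji), zero_mul])
            (fun h => absurd (Finset.mem_univ i) h)]
          rw [hcomplete i i, if_pos rfl, one_mul]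
  have hrep : ∀ x : Fin m → ℝ, β *ᵥ x = ∑ k, (σ k * (v k ⬝ᵥ x)) • u k := by
    intro x
    conv_lhs => rw [← hrepr x]
    rw [← Matrix.mulVecLin_apply, map_sum]
    refine Finset.sum_congr rfl fun k _ => ?_
    rw [LinearMap.map_smul, Matrix.mulVecLin_apply, hβveq k, smul_smul]
    congr 1
    exact mul_comm _ _
  refine ⟨σ, u, v, hσ0, hvorth, huorth, hrep, ?_⟩
  -- trace formula
  intro n
  set U : Matrix (Fin m) (Fin m) ℝ := (hG.eigenvectorUnitary : Matrix (Fin m) (Fin m) ℝ) with hU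
  have hUU : U * star U = 1 := Matrix.mem_unitaryGroup_iff.mp (hG.eigenvectorUnitary).2
  have hUU' : star U * U = 1 := Matrix.mem_unitaryGroup_iff'.mp (hG.eigenvectorUnitary).2
  have hspec : G = U * Matrix.diagonal d * star U := by
    convert hG.spectral_theorem using 2
    rw [Unitary.conjStarAlgAut_apply]; rfl
  have hpow : ∀ j : ℕ, G ^ j = U * Matrix.diagonal (fun k => d k ^ j) * star U := by
    intro j
    induction j with
    | zero =>
      have hdiag : Matrix.diagonal (fun k => d k ^ 0) = (1 : Matrix (Fin m) (Fin m) ℝ) := by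
        simp
      rw [pow_zero, hdiag, Matrix.mul_one, hUU]
    | succ j ih =>
      rw [pow_succ, ih, hspec]
      calc U * Matrix.diagonal (fun k => d k ^ j) * star U * (U * Matrix.diagonal d * star U)
          = U * (Matrix.diagonal (fun k => d k ^ j) * (star U * U) * Matrix.diagonal d) * star U := by
            simp only [Matrix.mul_assoc]
        _ = U * Matrix.diagonal (fun k => d k ^ (j+1)) * star U := by
            rw [hUU', Matrix.mul_one, Matrix.diagonal_mul_diagonal]
            congr 1
  rw [hpow n]
  rw [Matrix.trace_mul_cycle, hUU', Matrix.one_mul, Matrix.trace_diagonal]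
  refine Finset.sum_congr rfl fun k _ => ?_
  rw [← hσd k, ← pow_mul]

end MatrixPart

section CoreMatrix
open Matrix Finset

/-- Core matrix inequality: Schatten-type sum bound via SVD. -/
lemma core_matrix {m N : ℕ} {n : ℕ} (hn : 1 ≤ n) (β : Matrix (Fin m) (Fin m) ℝ)
    (x y : Fin N → (Fin m → ℝ))
    (hx : ∀ w : Fin m → ℝ, ∑ i, (x i ⬝ᵥ w) ^ 2 ≤ w ⬝ᵥ w)
    (hy : ∀ w : Fin m → ℝ, ∑ i, (y i ⬝ᵥ w) ^ 2 ≤ w ⬝ᵥ w) :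
    ∑ i, |y i ⬝ᵥ (β *ᵥ x i)| ^ (2 * n) ≤ ((βᴴ * β) ^ n).trace := by
  classical
  obtain ⟨σ, u, v, hσ0, hvorth, huorth, hrep, htr⟩ := svd_exists β
  set a : Fin N → Fin m → ℝ := fun i k => |v k ⬝ᵥ x i| * |y i ⬝ᵥ u k| with ha
  have ha0 : ∀ i k, 0 ≤ a i k := fun i k => mul_nonneg (abs_nonneg _) (abs_nonneg _)
  -- |y_i ⬝ β x_i| ≤ ∑_k σ_k a_{ik}
  have h1 : ∀ i, |y i ⬝ᵥ (β *ᵥ x i)| ≤ ∑ k, a i k * σ k := by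
    intro i
    rw [hrep (x i), dot_sum_right]
    refine (Finset.abs_sum_le_sum_abs _ _).trans ?_
    refine Finset.sum_le_sum fun k _ => ?_
    rw [dotProduct_smul, smul_eq_mul, abs_mul, abs_mul, abs_of_nonneg (hσ0 k)]
    rw [ha]
    ring_nf
    exact le_of_eq (by ring)
  -- norms at most one
  have hvnorm : ∀ k l, k ≠ l → v k ⬝ᵥ v l = 0 := fun k l hkl => by rw [hvorth k l, if_neg hkl]
  have hvone : ∀ k, v k ⬝ᵥ v k = 1 := fun k => by rw [hvorth k k, if_pos rfl]
  have hunorm : ∀ k l, k ≠ l → u k ⬝ᵥ u l = 0 := fun k l hkl => by rw [huorth k l, if_neg hkl]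
  have huone : ∀ k, u k ⬝ᵥ u k ≤ 1 := fun k => by
    rw [huorth k k, if_pos rfl]; split <;> norm_num
  have hxx : ∀ i, x i ⬝ᵥ x i ≤ 1 := by
    intro i
    have h := hx (x i)
    have h2 : (x i ⬝ᵥ x i) ^ 2 ≤ ∑ j, (x j ⬝ᵥ x i) ^ 2 :=
      Finset.single_le_sum (f := fun j => (x j ⬝ᵥ x i) ^ 2) (fun j _ => sq_nonneg _)
        (Finset.mem_univ i)
    have h3 : (x i ⬝ᵥ x i) ^ 2 ≤ x i ⬝ᵥ x i := h2.trans h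
    nlinarith [dot_self_nonneg (x i)]
  have hyy : ∀ i, y i ⬝ᵥ y i ≤ 1 := by
    intro i
    have h := hy (y i)
    have h2 : (y i ⬝ᵥ y i) ^ 2 ≤ ∑ j, (y j ⬝ᵥ y i) ^ 2 :=
      Finset.single_le_sum (f := fun j => (y j ⬝ᵥ y i) ^ 2) (fun j _ => sq_nonneg _)
        (Finset.mem_univ i)
    have h3 : (y i ⬝ᵥ y i) ^ 2 ≤ y i ⬝ᵥ y i := h2.trans h
    nlinarith [dot_self_nonneg (y i)]
  -- row sums
  have hrow : ∀ i, ∑ k, a i k ≤ 1 := by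
    intro i
    have hcs : ∑ k, a i k ≤
        Real.sqrt (∑ k, |v k ⬝ᵥ x i| ^ 2) * Real.sqrt (∑ k, |y i ⬝ᵥ u k| ^ 2) :=
      sum_mul_le_sqrt_mul_sqrt _ _ _
    have hb1 : ∑ k, |v k ⬝ᵥ x i| ^ 2 ≤ 1 := by
      have : ∑ k, (v k ⬝ᵥ x i) ^ 2 ≤ x i ⬝ᵥ x i :=
        bessel_dot Finset.univ v (fun k _ l _ h => hvnorm k l h)
          (fun k _ => le_of_eq (hvone k)) (x i)
      simp only [sq_abs]
      exact this.trans (hxx i)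
    have hb2 : ∑ k, |y i ⬝ᵥ u k| ^ 2 ≤ 1 := by
      have : ∑ k, (u k ⬝ᵥ y i) ^ 2 ≤ y i ⬝ᵥ y i :=
        bessel_dot Finset.univ u (fun k _ l _ h => hunorm k l h)
          (fun k _ => huone k) (y i)
      calc ∑ k, |y i ⬝ᵥ u k| ^ 2 = ∑ k, (u k ⬝ᵥ y i) ^ 2 := by
            refine Finset.sum_congr rfl fun k _ => ?_
            rw [sq_abs, dotProduct_comm]
        _ ≤ 1 := this.trans (hyy i)
    calc ∑ k, a i k ≤ _ := hcs
      _ ≤ Real.sqrt 1 * Real.sqrt 1 := by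
          refine mul_le_mul (Real.sqrt_le_sqrt hb1) (Real.sqrt_le_sqrt hb2)
            (Real.sqrt_nonneg _) (Real.sqrt_nonneg _)
      _ = 1 := by rw [Real.sqrt_one, mul_one]
  -- column sums
  have hcol : ∀ k, ∑ i, a i k ≤ 1 := by
    intro k
    have hcs : ∑ i, a i k ≤
        Real.sqrt (∑ i, |v k ⬝ᵥ x i| ^ 2) * Real.sqrt (∑ i, |y i ⬝ᵥ u k| ^ 2) :=
      sum_mul_le_sqrt_mul_sqrt _ _ _
    have hb1 : ∑ i, |v k ⬝ᵥ x i| ^ 2 ≤ 1 := by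
      have h := hx (v k)
      calc ∑ i, |v k ⬝ᵥ x i| ^ 2 = ∑ i, (x i ⬝ᵥ v k) ^ 2 := by
            refine Finset.sum_congr rfl fun i _ => ?_
            rw [sq_abs, dotProduct_comm]
        _ ≤ v k ⬝ᵥ v k := h
        _ = 1 := hvone k
    have hb2 : ∑ i, |y i ⬝ᵥ u k| ^ 2 ≤ 1 := by
      have h := hy (u k)
      calc ∑ i, |y i ⬝ᵥ u k| ^ 2 = ∑ i, (y i ⬝ᵥ u k) ^ 2 := by
            refine Finset.sum_congr rfl fun i _ => by rw [sq_abs]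
        _ ≤ u k ⬝ᵥ u k := h
        _ ≤ 1 := huone k
    calc ∑ i, a i k ≤ _ := hcs
      _ ≤ Real.sqrt 1 * Real.sqrt 1 := by
          refine mul_le_mul (Real.sqrt_le_sqrt hb1) (Real.sqrt_le_sqrt hb2)
            (Real.sqrt_nonneg _) (Real.sqrt_nonneg _)
      _ = 1 := by rw [Real.sqrt_one, mul_one]
  have h2n : 1 ≤ 2 * n := by omega
  calc ∑ i, |y i ⬝ᵥ (β *ᵥ x i)| ^ (2 * n)
      ≤ ∑ i, (∑ k, a i k * σ k) ^ (2 * n) := by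
        refine Finset.sum_le_sum fun i _ => ?_
        exact pow_le_pow_left₀ (abs_nonneg _) (h1 i) _
    _ ≤ ∑ i, ∑ k, a i k * σ k ^ (2 * n) := by
        refine Finset.sum_le_sum fun i _ => ?_
        exact jensen_substoch Finset.univ (a i) σ (fun k _ => ha0 i k) (hrow i)
          (fun k _ => hσ0 k) h2n
    _ = ∑ k, (∑ i, a i k) * σ k ^ (2 * n) := by
        rw [Finset.sum_comm]
        exact Finset.sum_congr rfl fun k _ => (Finset.sum_mul _ _ _).symm
    _ ≤ ∑ k, 1 * σ k ^ (2 * n) := by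
        refine Finset.sum_le_sum fun k _ => ?_
        exact mul_le_mul_of_nonneg_right (hcol k) (pow_nonneg (hσ0 k) _)
    _ = ∑ k, σ k ^ (2 * n) := by simp
    _ = ((βᴴ * β) ^ n).trace := (htr n).symm

/-- entrywise nonneg and monotone under powers -/
lemma entry_pow_mono {m : ℕ} (P Q : Matrix (Fin m) (Fin m) ℝ)
    (hP0 : ∀ i j, 0 ≤ P i j) (hPQ : ∀ i j, P i j ≤ Q i j) (k : ℕ) :
    (∀ i j, 0 ≤ (P ^ k) i j) ∧ (∀ i j, (P ^ k) i j ≤ (Q ^ k) i j) := by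
  induction k with
  | zero =>
    constructor <;> intro i j <;> simp [Matrix.one_apply]
    · positivity
  | succ k ih =>
    obtain ⟨ih0, ihle⟩ := ih
    constructor
    · intro i j
      rw [pow_succ, Matrix.mul_apply]
      exact Finset.sum_nonneg fun l _ => mul_nonneg (ih0 i l) (hP0 l j)
    · intro i j
      rw [pow_succ, pow_succ, Matrix.mul_apply, Matrix.mul_apply]
      refine Finset.sum_le_sum fun l _ => ?_
      exact mul_le_mul (ihle i l) (hPQ l j) (hP0 l j) ((ih0 i l).trans (ihle i l))

lemma trace_pow_mono {m : ℕ} (β γ : Matrix (Fin m) (Fin m) ℝ)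
    (hβ0 : ∀ i j, 0 ≤ β i j) (hβγ : ∀ i j, β i j ≤ γ i j) (n : ℕ) :
    ((βᴴ * β) ^ n).trace ≤ ((γᴴ * γ) ^ n).trace := by
  set P := βᴴ * β with hP
  set Q := γᴴ * γ with hQ
  have hP0 : ∀ i j, 0 ≤ P i j := by
    intro i j
    rw [hP, Matrix.mul_apply]
    refine Finset.sum_nonneg fun l _ => ?_
    rw [Matrix.conjTranspose_apply]
    simp only [star_trivial]
    exact mul_nonneg (hβ0 l i) (hβ0 l j)
  have hPQ : ∀ i j, P i j ≤ Q i j := by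
    intro i j
    rw [hP, hQ, Matrix.mul_apply, Matrix.mul_apply]
    refine Finset.sum_le_sum fun l _ => ?_
    rw [Matrix.conjTranspose_apply, Matrix.conjTranspose_apply]
    simp only [star_trivial]
    exact mul_le_mul (hβγ l i) (hβγ l j) (hβ0 l j) ((hβ0 l i).trans (hβγ l i))
  obtain ⟨_, hle⟩ := entry_pow_mono P Q hP0 hPQ n
  rw [Matrix.trace, Matrix.trace]
  exact Finset.sum_le_sum fun i _ => hle i i

end CoreMatrix

section HilbertGlue

open Matrix

variable {H : Type*} [NormedAddCommGroup H] [InnerProductSpace ℝ H]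

/-- projection onto the span of a finite orthonormal family, explicitly -/
noncomputable def Qproj {m : ℕ} (χ : Fin m → H) (z : H) : H :=
  ∑ j, (inner ℝ (χ j) z : ℝ) • χ j

lemma Qproj_mem {m : ℕ} (χ : Fin m → H) (z : H) :
    Qproj χ z ∈ Submodule.span ℝ (Set.range χ) :=
  Submodule.sum_mem _ fun j _ => Submodule.smul_mem _ _
    (Submodule.subset_span (Set.mem_range_self j))

lemma inner_sub_Qproj {m : ℕ} {χ : Fin m → H} (hχ : Orthonormal ℝ χ) (z : H) (j : Fin m) :
    (inner ℝ (z - Qproj χ z) (χ j) : ℝ) = 0 := by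
  rw [inner_sub_left]
  have h1 : (inner ℝ (Qproj χ z) (χ j) : ℝ) = inner ℝ (χ j) z := by
    rw [Qproj, hχ.inner_left_fintype]
    simp
  rw [h1, real_inner_comm]
  ring

lemma inner_sub_Qproj_span {m : ℕ} {χ : Fin m → H} (hχ : Orthonormal ℝ χ) (z : H) {g : H}
    (hg : g ∈ Submodule.span ℝ (Set.range χ)) : (inner ℝ (z - Qproj χ z) g : ℝ) = 0 := by
  induction hg using Submodule.span_induction with
  | mem w hw =>
    obtain ⟨j, rfl⟩ := hw
    exact inner_sub_Qproj hχ z j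
  | zero => exact inner_zero_right _
  | add w₁ w₂ _ _ h1 h2 => rw [inner_add_right, h1, h2, add_zero]
  | smul c w _ h => rw [real_inner_smul_right, h, mul_zero]

lemma Qproj_min {m : ℕ} {χ : Fin m → H} (hχ : Orthonormal ℝ χ) (z : H) {g : H}
    (hg : g ∈ Submodule.span ℝ (Set.range χ)) : ‖z - Qproj χ z‖ ≤ ‖z - g‖ := by
  have hsplit : z - g = (z - Qproj χ z) + (Qproj χ z - g) := by abel
  have horth : (inner ℝ (z - Qproj χ z) (Qproj χ z - g) : ℝ) = 0 := by
    rw [inner_sub_right, inner_sub_Qproj_span hχ z hg,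
      inner_sub_Qproj_span hχ z (Qproj_mem χ z), sub_zero]
  have hsq : ‖z - g‖ ^ 2 = ‖z - Qproj χ z‖ ^ 2 + ‖Qproj χ z - g‖ ^ 2 := by
    rw [hsplit, @norm_add_sq_real, horth]
    ring
  have h2 : ‖z - Qproj χ z‖ ^ 2 ≤ ‖z - g‖ ^ 2 := by
    rw [hsq]
    nlinarith [sq_nonneg ‖Qproj χ z - g‖]
  exact (pow_le_pow_iff_left₀ (norm_nonneg _) (norm_nonneg _) two_ne_zero).mp h2

lemma norm_Qproj_le {m : ℕ} {χ : Fin m → H} (hχ : Orthonormal ℝ χ) (z : H) :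
    ‖Qproj χ z‖ ≤ ‖z‖ := by
  have h1 : ‖Qproj χ z‖ ^ 2 = ∑ j, (inner ℝ (χ j) z : ℝ) ^ 2 := by
    rw [← real_inner_self_eq_norm_sq]
    rw [Qproj, hχ.inner_sum]
    refine Finset.sum_congr rfl fun j _ => ?_
    simp [conj_trivial]
    ring
  have h2 : ∑ j, (inner ℝ (χ j) z : ℝ) ^ 2 ≤ ‖z‖ ^ 2 := by
    have := hχ.sum_inner_products_le z (s := Finset.univ)
    calc ∑ j, (inner ℝ (χ j) z : ℝ) ^ 2 = ∑ j, ‖(inner ℝ (χ j) z : ℝ)‖ ^ 2 := by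
          refine Finset.sum_congr rfl fun j _ => ?_
          rw [Real.norm_eq_abs, sq_abs]
      _ ≤ ‖z‖ ^ 2 := this
  have h3 : ‖Qproj χ z‖ ^ 2 ≤ ‖z‖ ^ 2 := by rw [h1]; exact h2
  exact (pow_le_pow_iff_left₀ (norm_nonneg _) (norm_nonneg _) two_ne_zero).mp h3

lemma inner_Qproj_eq_dot {m : ℕ} {χ : Fin m → H} (hχ : Orthonormal ℝ χ)
    (T : H →L[ℝ] H) (e f : H) :
    (inner ℝ (T (Qproj χ e)) (Qproj χ f) : ℝ)
      = (fun j => (inner ℝ (χ j) f : ℝ)) ⬝ᵥ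
          ((Matrix.of fun j k => (inner ℝ (T (χ k)) (χ j) : ℝ)) *ᵥ (fun j => (inner ℝ (χ j) e : ℝ))) := by
  have hT : T (Qproj χ e) = ∑ k, (inner ℝ (χ k) e : ℝ) • T (χ k) := by
    rw [Qproj, map_sum]
    exact Finset.sum_congr rfl fun k _ => by rw [T.map_smul]
  rw [hT, Qproj, sum_inner]
  calc ∑ k, (inner ℝ ((inner ℝ (χ k) e : ℝ) • T (χ k)) (∑ j, (inner ℝ (χ j) f : ℝ) • χ j) : ℝ)
      = ∑ k, ∑ j, (inner ℝ (χ k) e : ℝ) * ((inner ℝ (χ j) f : ℝ) * (inner ℝ (T (χ k)) (χ j) : ℝ)) := by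
        refine Finset.sum_congr rfl fun k _ => ?_
        rw [real_inner_smul_left, inner_sum, Finset.mul_sum]
        refine Finset.sum_congr rfl fun j _ => ?_
        rw [real_inner_smul_right]
    _ = ∑ j, (inner ℝ (χ j) f : ℝ) * ∑ k, (inner ℝ (T (χ k)) (χ j) : ℝ) * (inner ℝ (χ k) e : ℝ) := by
        rw [Finset.sum_comm]
        refine Finset.sum_congr rfl fun j _ => ?_
        rw [Finset.mul_sum]
        refine Finset.sum_congr rfl fun k _ => by ring
    _ = _ := by
        refine Finset.sum_congr rfl fun j _ => ?_
        simp only [Matrix.mulVec, dotProduct, Matrix.of_apply]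

end HilbertGlue

section LpApprox

open MeasureTheory

variable {α : Type*} [MeasurableSpace α] {μ : Measure α}

lemma Lp_coeFn_finset_sum {ι : Type*} (s : Finset ι) (f : ι → Lp ℝ 2 μ) :
    ⇑(∑ i ∈ s, f i) =ᵐ[μ] fun a => ∑ i ∈ s, f i a := by
  classical
  induction s using Finset.induction_on with
  | empty =>
    simp only [Finset.sum_empty]
    exact Lp.coeFn_zero _ _ _
  | insert j s' hnot ih =>
    rw [Finset.sum_insert hnot]
    filter_upwards [Lp.coeFn_add (f j) (∑ i ∈ s', f i), ih] with a h1 h2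
    rw [h1]
    simp only [Pi.add_apply, h2]
    rw [Finset.sum_insert hnot]

lemma inner_indicator_one (s t : Set α) (hs : MeasurableSet s) (ht : MeasurableSet t)
    (hμs : μ s ≠ ⊤) (hμt : μ t ≠ ⊤) :
    (inner ℝ (indicatorConstLp 2 hs hμs (1:ℝ)) (indicatorConstLp 2 ht hμt (1:ℝ)) : ℝ)
      = (μ (t ∩ s)).toReal := by
  rw [L2.inner_indicatorConstLp_eq_setIntegral_inner ℝ]
  have h1 : ∀ᵐ x ∂(μ.restrict s), (inner ℝ (1:ℝ) (indicatorConstLp 2 ht hμt (1:ℝ) x) : ℝ)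
      = t.indicator (fun _ => (1:ℝ)) x := by
    have h2 : ⇑(indicatorConstLp 2 ht hμt (1:ℝ)) =ᵐ[μ] t.indicator fun _ => (1:ℝ) :=
      indicatorConstLp_coeFn
    filter_upwards [ae_restrict_of_ae h2] with x hx
    rw [RCLike.inner_apply, conj_trivial, mul_one, hx]
  rw [integral_congr_ae h1]
  rw [integral_indicator_const (1:ℝ) ht]
  rw [measureReal_def, Measure.restrict_apply ht]
  simp

/-- Approximation of finitely many L² functions from the span of a nonnegative orthonormal
family. -/
lemma approx_by_nonneg_orthonormal (N : ℕ) (v : Fin N → Lp ℝ 2 μ) {ε : ℝ} (hε : 0 < ε) :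
    ∃ (m : ℕ) (χ : Fin m → Lp ℝ 2 μ), Orthonormal ℝ χ ∧ (∀ j, 0 ≤ χ j) ∧
      ∀ i, ∃ g ∈ Submodule.span ℝ (Set.range χ), ‖v i - g‖ ≤ ε := by
  classical
  -- simple function approximations
  have hsimple : ∀ i : Fin N, ∃ t : SimpleFunc α ℝ,
      eLpNorm (⇑(v i) - ⇑t) 2 μ < ENNReal.ofReal ε ∧ MemLp t 2 μ := by
    intro i
    exact (Lp.memLp (v i)).exists_simpleFunc_eLpNorm_sub_lt (by norm_num)
      (by simp [hε, ENNReal.ofReal_eq_zero, not_le])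
  choose t ht hmem using hsimple
  set F : α → (Fin N → ℝ) := fun a i => t i a with hF
  have hFrange : (Set.range F).Finite := by
    refine Set.Finite.subset (Set.Finite.pi fun i => (t i).finite_range) ?_
    rintro _ ⟨a, rfl⟩
    exact fun i _ => Set.mem_range_self a
  set V : Finset (Fin N → ℝ) := hFrange.toFinset with hV
  set E : (Fin N → ℝ) → Set α := fun c => ⋂ i, (t i) ⁻¹' {c i} with hE
  have hE_meas : ∀ c, MeasurableSet (E c) := fun c =>
    MeasurableSet.iInter fun i => (t i).measurableSet_fiber (c i)
  have hmemE : ∀ a, a ∈ E (F a) := fun a => Set.mem_iInter.2 fun i => rfl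
  have hE_det : ∀ a c, a ∈ E c → c = F a := by
    intro a c hc
    funext i
    have := Set.mem_iInter.1 hc i
    exact this.symm
  have hE_fin : ∀ c, c ≠ 0 → μ (E c) ≠ ⊤ := by
    intro c hc
    obtain ⟨i, hi⟩ := Function.ne_iff.1 hc
    refine (lt_of_le_of_lt (measure_mono ?_) ((t i).measure_preimage_lt_top_of_memLp
      (by norm_num) (by norm_num) (hmem i) (c i) hi)).ne
    exact Set.iInter_subset _ i
  set J : Finset (Fin N → ℝ) := V.filter (fun c => c ≠ 0 ∧ μ (E c) ≠ 0) with hJ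
  set m : ℕ := J.card with hm
  set eJ : Fin m ≃ ↥J := (Fintype.equivFinOfCardEq (Fintype.card_coe J)).symm with heJ
  have hJprop : ∀ k : Fin m, (eJ k : Fin N → ℝ) ∈ V ∧ (eJ k : Fin N → ℝ) ≠ 0 ∧
      μ (E (eJ k)) ≠ 0 := by
    intro k
    have h2 := Finset.mem_filter.1 (eJ k).2
    exact ⟨h2.1, h2.2.1, h2.2.2⟩
  set dR : Fin m → ℝ := fun k => (μ (E (eJ k))).toReal with hdR
  have hdRpos : ∀ k, 0 < dR k :=
    fun k => ENNReal.toReal_pos (hJprop k).2.2 (hE_fin _ (hJprop k).2.1)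
  set χ : Fin m → Lp ℝ 2 μ := fun k =>
    (Real.sqrt (dR k))⁻¹ • indicatorConstLp 2 (hE_meas (eJ k)) (hE_fin _ (hJprop k).2.1) (1:ℝ)
    with hχ
  have hinj : ∀ k l : Fin m, k ≠ l → (eJ k : Fin N → ℝ) ≠ (eJ l : Fin N → ℝ) := by
    intro k l hkl h
    exact hkl (eJ.injective (Subtype.ext h))
  have hdisj : ∀ c c' : Fin N → ℝ, c ≠ c' → E c ∩ E c' = ∅ := by
    intro c c' hcc
    rw [Set.eq_empty_iff_forall_notMem]
    intro a ⟨h1, h2⟩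
    exact hcc ((hE_det a c h1).trans (hE_det a c' h2).symm)
  have horth : Orthonormal ℝ χ := by
    rw [orthonormal_iff_ite]
    intro k l
    rw [hχ]
    simp only
    rw [real_inner_smul_left, real_inner_smul_right, inner_indicator_one]
    by_cases hkl : k = l
    · subst hkl
      rw [if_pos rfl, Set.inter_self]
      have hs : Real.sqrt (dR k) ≠ 0 := ne_of_gt (Real.sqrt_pos.2 (hdRpos k))
      have : (√(dR k))⁻¹ * ((√(dR k))⁻¹ * dR k) = 1 := by
        rw [← mul_assoc, ← mul_inv, Real.mul_self_sqrt (hdRpos k).le, inv_mul_cancel₀ (hdRpos k).ne']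
      exact this
    · rw [if_neg hkl, hdisj _ _ (Ne.symm (hinj k l hkl))]
      simp
  have hnonneg : ∀ k, 0 ≤ χ k := by
    intro k
    rw [← Lp.coeFn_nonneg]
    filter_upwards [Lp.coeFn_smul ((Real.sqrt (dR k))⁻¹) (indicatorConstLp 2 (hE_meas (eJ k))
      (hE_fin _ (hJprop k).2.1) (1:ℝ)), indicatorConstLp_coeFn (p := 2)
      (hs := hE_meas (eJ k)) (hμs := hE_fin _ (hJprop k).2.1) (c := (1:ℝ))] with a h1 h2
    rw [h1]
    simp only [Pi.smul_apply, h2, smul_eq_mul]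
    refine mul_nonneg (by positivity) ?_
    exact Set.indicator_nonneg (fun _ _ => zero_le_one) a
  refine ⟨m, χ, horth, hnonneg, ?_⟩
  intro i
  refine ⟨(hmem i).toLp (t i), ?_, ?_⟩
  · -- span membership
    have hgoal : (hmem i).toLp (t i)
        = ∑ k, ((eJ k : Fin N → ℝ) i * Real.sqrt (dR k)) • χ k := by
      apply MeasureTheory.Lp.ext
      set bad : Set α := ⋃ c ∈ (↑(V.filter (fun c => μ (E c) = 0)) : Set (Fin N → ℝ)), E c
        with hbad
      have hbad0 : μ bad = 0 := by
        rw [hbad]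
        refine (measure_biUnion_null_iff (Finset.countable_toSet _)).2 ?_
        intro c hc
        rw [Finset.mem_coe, Finset.mem_filter] at hc
        exact hc.2
      set bk : Fin m → ℝ := fun k => (eJ k : Fin N → ℝ) i * Real.sqrt (dR k) with hbk
      have hcoe : ⇑(∑ k, bk k • χ k)
          =ᵐ[μ] fun a => ∑ k, (bk k • χ k) a :=
        Lp_coeFn_finset_sum _ _
      have hsmul : ∀ᵐ a ∂μ, ∀ k : Fin m, (bk k • χ k) a = bk k * (χ k) a := by
        refine (ae_all_iff).2 fun k => ?_
        filter_upwards [Lp.coeFn_smul (bk k) (χ k)] with a h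
        rw [h, Pi.smul_apply, smul_eq_mul]
      have hχk : ∀ k : Fin m, ⇑(χ k) =ᵐ[μ] fun a =>
          (Real.sqrt (dR k))⁻¹ * (E (eJ k)).indicator (fun _ => (1:ℝ)) a := by
        intro k
        filter_upwards [Lp.coeFn_smul ((Real.sqrt (dR k))⁻¹) (indicatorConstLp 2 (hE_meas (eJ k))
          (hE_fin _ (hJprop k).2.1) (1:ℝ)), indicatorConstLp_coeFn (p := 2)
          (hs := hE_meas (eJ k)) (hμs := hE_fin _ (hJprop k).2.1) (c := (1:ℝ))] with a h1 h2
        rw [h1]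
        simp only [Pi.smul_apply, h2, smul_eq_mul]
      have hae : ∀ᵐ a ∂μ, ∀ k : Fin m, (χ k) a
          = (Real.sqrt (dR k))⁻¹ * (E (eJ k)).indicator (fun _ => (1:ℝ)) a :=
        (ae_all_iff).2 fun k => hχk k
      have htoLp : ⇑((hmem i).toLp (t i)) =ᵐ[μ] ⇑(t i) := (hmem i).coeFn_toLp
      have hbad_ae : ∀ᵐ a ∂μ, a ∉ bad := by
        rw [ae_iff]
        simpa using hbad0
      filter_upwards [hcoe, hae, htoLp, hbad_ae, hsmul] with a hc ha ht' hb hsm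
      rw [ht', hc]
      -- pointwise computation
      have hterm : ∀ k : Fin m, (bk k • χ k) a
          = (eJ k : Fin N → ℝ) i * (E (eJ k)).indicator (fun _ => (1:ℝ)) a := by
        intro k
        rw [hsm k, ha k, hbk]
        have hs : Real.sqrt (dR k) ≠ 0 := ne_of_gt (Real.sqrt_pos.2 (hdRpos k))
        field_simp
      rw [Finset.sum_congr rfl fun k _ => hterm k]
      by_cases hFa : F a ∈ J
      · -- exactly one term survives
        set k0 : Fin m := eJ.symm ⟨F a, hFa⟩ with hk0
        have hek0 : (eJ k0 : Fin N → ℝ) = F a := by rw [hk0, Equiv.apply_symm_apply]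
        rw [Finset.sum_eq_single k0]
        · rw [hek0]
          have : a ∈ E (F a) := hmemE a
          rw [Set.indicator_of_mem this]
          simp [hF]
        · intro k _ hk
          have hne : (eJ k : Fin N → ℝ) ≠ F a := by
            rw [← hek0]
            exact hinj k k0 hk
          have : a ∉ E (eJ k) := fun hmem' => hne (hE_det a _ hmem')
          rw [Set.indicator_of_notMem this, mul_zero]
        · intro h
          exact absurd (Finset.mem_univ k0) h
      · -- all terms vanish and t i a = 0
        have hFV : F a ∈ V := by
          rw [hV, Set.Finite.mem_toFinset]
          exact Set.mem_range_self a
        have hcase : F a = 0 ∨ μ (E (F a)) = 0 := by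
          by_contra hcon
          push_neg at hcon
          exact hFa (by rw [hJ, Finset.mem_filter]; exact ⟨hFV, hcon.1, hcon.2⟩)
        have hzero : ∀ k : Fin m, a ∉ E (eJ k) := by
          intro k hmem'
          have := hE_det a _ hmem'
          rcases hcase with h0 | hμ0
          · exact (hJprop k).2.1 (this.trans h0)
          · exact hb (Set.mem_biUnion (Finset.mem_coe.mpr
              (Finset.mem_filter.mpr ⟨hFV, hμ0⟩)) (hmemE a))
        rw [Finset.sum_eq_zero fun k _ => by
          rw [Set.indicator_of_notMem (hzero k), mul_zero]]
        rcases hcase with h0 | hμ0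
        · have : t i a = F a i := rfl
          rw [this, h0]
          rfl
        · exact absurd (Set.mem_biUnion (Finset.mem_coe.mpr
            (Finset.mem_filter.mpr ⟨hFV, hμ0⟩)) (hmemE a)) hb
    rw [hgoal]
    exact Submodule.sum_mem _ fun k _ => Submodule.smul_mem _ _
      (Submodule.subset_span (Set.mem_range_self k))
  · -- norm bound
    have h1 : ‖v i - (hmem i).toLp (t i)‖ = (eLpNorm (⇑(v i) - ⇑(t i)) 2 μ).toReal := by
      rw [Lp.norm_def]
      congr 1
      apply eLpNorm_congr_ae
      filter_upwards [Lp.coeFn_sub (v i) ((hmem i).toLp (t i)), (hmem i).coeFn_toLp] with a ha hb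
      rw [ha]
      simp [hb]
    rw [h1]
    exact ENNReal.toReal_le_of_le_ofReal hε.le (ht i).le

end LpApprox

section MainAux

open Matrix MeasureTheory
open scoped ENNReal NNReal

variable {H : Type*} [NormedAddCommGroup H] [InnerProductSpace ℝ H]

lemma inner_apply_sum_dot {m : ℕ} (χ : Fin m → H) (T : H →L[ℝ] H) (xv yv : Fin m → ℝ) :
    (inner ℝ (T (∑ j, xv j • χ j)) (∑ j, yv j • χ j) : ℝ)
      = yv ⬝ᵥ ((Matrix.of fun j k => (inner ℝ (T (χ k)) (χ j) : ℝ)) *ᵥ xv) := by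
  have hT : T (∑ j, xv j • χ j) = ∑ k, xv k • T (χ k) := by
    rw [map_sum]
    exact Finset.sum_congr rfl fun k _ => by rw [T.map_smul]
  rw [hT, sum_inner]
  calc ∑ k, (inner ℝ (xv k • T (χ k)) (∑ j, yv j • χ j) : ℝ)
      = ∑ k, ∑ j, xv k * (yv j * (inner ℝ (T (χ k)) (χ j) : ℝ)) := by
        refine Finset.sum_congr rfl fun k _ => ?_
        rw [real_inner_smul_left, inner_sum, Finset.mul_sum]
        refine Finset.sum_congr rfl fun j _ => ?_
        rw [real_inner_smul_right]
    _ = ∑ j, yv j * ∑ k, (inner ℝ (T (χ k)) (χ j) : ℝ) * xv k := by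
        rw [Finset.sum_comm]
        refine Finset.sum_congr rfl fun j _ => ?_
        rw [Finset.mul_sum]
        refine Finset.sum_congr rfl fun k _ => by ring
    _ = _ := by
        refine Finset.sum_congr rfl fun j _ => ?_
        simp only [Matrix.mulVec, dotProduct, Matrix.of_apply]

lemma bessel_coords {m N : ℕ} {χ : Fin m → H} (hχ : Orthonormal ℝ χ) {e : Fin N → H}
    (he : Orthonormal ℝ e) (w : Fin m → ℝ) :
    ∑ i, ((fun j => (inner ℝ (χ j) (e i) : ℝ)) ⬝ᵥ w) ^ 2 ≤ w ⬝ᵥ w := by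
  set z : H := ∑ j, w j • χ j with hz
  have hdot : ∀ i, (fun j => (inner ℝ (χ j) (e i) : ℝ)) ⬝ᵥ w = (inner ℝ z (e i) : ℝ) := by
    intro i
    rw [hz, sum_inner]
    refine (Finset.sum_congr rfl fun j _ => ?_).symm
    rw [real_inner_smul_left]
    simp [dotProduct, mul_comm]
  have hz2 : (inner ℝ z z : ℝ) = w ⬝ᵥ w := by
    rw [hz, hχ.inner_sum]
    simp [conj_trivial, dotProduct]
  calc ∑ i, ((fun j => (inner ℝ (χ j) (e i) : ℝ)) ⬝ᵥ w) ^ 2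
      = ∑ i, ‖(inner ℝ (e i) z : ℝ)‖ ^ 2 := by
        refine Finset.sum_congr rfl fun i _ => ?_
        rw [hdot i, Real.norm_eq_abs, sq_abs, real_inner_comm]
    _ ≤ ‖z‖ ^ 2 := he.sum_inner_products_le z
    _ = (inner ℝ z z : ℝ) := (real_inner_self_eq_norm_sq z).symm
    _ = w ⬝ᵥ w := hz2

lemma Lp_inner_nonneg {α : Type*} [MeasurableSpace α] {μ : Measure α}
    (g h : Lp ℝ 2 μ) (hg : 0 ≤ g) (hh : 0 ≤ h) : 0 ≤ (inner ℝ g h : ℝ) := by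
  rw [L2.inner_def]
  refine integral_nonneg_of_ae ?_
  filter_upwards [(Lp.coeFn_nonneg g).2 hg, (Lp.coeFn_nonneg h).2 hh] with a hga hha
  rw [RCLike.inner_apply, conj_trivial]
  exact mul_nonneg hha hga

lemma body_eq_coe (n : ℕ) {N : ℕ} (c : Fin N → ℝ) :
    ∑ i, ((‖c i‖₊ : ℝ≥0∞) ^ (2 * (n : ℝ)))
      = ((∑ i, ‖c i‖₊ ^ (2 * n) : NNReal) : ℝ≥0∞) := by
  have h : ∀ x : NNReal, (x : ℝ≥0∞) ^ (2 * (n : ℝ)) = ((x ^ (2 * n) : NNReal) : ℝ≥0∞) := by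
    intro x
    rw [show (2 * (n : ℝ)) = ((2 * n : ℕ) : ℝ) by push_cast; ring,
      ENNReal.rpow_natCast, ENNReal.coe_pow]
  rw [ENNReal.coe_finset_sum]
  exact Finset.sum_congr rfl fun i _ => h _

end MainAux

section MainReal

open Matrix MeasureTheory
open scoped ENNReal NNReal

variable {H : Type*} [NormedAddCommGroup H] [InnerProductSpace ℝ H]

/-- A-side: the trace of the compressed matrix is bounded by the Schatten-type bound. -/
lemma trace_le_C (n : ℕ) (hn : 1 ≤ n) (A : H →L[ℝ] H) {m : ℕ}
    {χ : Fin m → H} (hχ : Orthonormal ℝ χ) (C : ℝ)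
    (hA : ∀ (mK : ℕ) (ξ η : Fin mK → H), Orthonormal ℝ ξ → Orthonormal ℝ η →
      ∑ a, |(inner ℝ (A (ξ a)) (η a) : ℝ)| ^ (2 * n) ≤ C) :
    (((Matrix.of fun j k => (inner ℝ (A (χ k)) (χ j) : ℝ))ᴴ *
      (Matrix.of fun j k => (inner ℝ (A (χ k)) (χ j) : ℝ))) ^ n).trace ≤ C := by
  classical
  set γ : Matrix (Fin m) (Fin m) ℝ := Matrix.of fun j k => (inner ℝ (A (χ k)) (χ j) : ℝ) with hγ
  obtain ⟨σ, u, v, hσ0, hvorth, huorth, hrep, htr⟩ := svd_exists γ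
  rw [htr n]
  set K : Finset (Fin m) := Finset.univ.filter (fun k => σ k ≠ 0) with hK
  set mK : ℕ := K.card with hmK
  set eK : Fin mK ≃ ↥K := (Fintype.equivFinOfCardEq (Fintype.card_coe K)).symm with heK
  have hKne : ∀ a : Fin mK, σ (eK a : Fin m) ≠ 0 :=
    fun a => (Finset.mem_filter.1 (eK a).2).2
  have hKinj : ∀ a b : Fin mK, ((eK a : Fin m) = (eK b : Fin m)) ↔ a = b := by
    intro a b
    constructor
    · intro h
      exact eK.injective (Subtype.ext h)
    · intro h; rw [h]
  set ξ : Fin mK → H := fun a => ∑ j, v (eK a : Fin m) j • χ j with hξ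
  set η : Fin mK → H := fun a => ∑ j, u (eK a : Fin m) j • χ j with hη
  have hinner_gen : ∀ (w w' : Fin m → ℝ),
      (inner ℝ (∑ j, w j • χ j) (∑ j, w' j • χ j) : ℝ) = w ⬝ᵥ w' := by
    intro w w'
    rw [hχ.inner_sum]
    simp [conj_trivial, dotProduct]
  have horthξ : Orthonormal ℝ ξ := by
    rw [orthonormal_iff_ite]
    intro a b
    rw [hξ]
    simp only
    rw [hinner_gen, hvorth]
    by_cases h : a = b
    · subst h; simp
    · rw [if_neg (fun hc => h ((hKinj a b).1 hc)), if_neg h]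
  have horthη : Orthonormal ℝ η := by
    rw [orthonormal_iff_ite]
    intro a b
    rw [hη]
    simp only
    rw [hinner_gen, huorth]
    by_cases h : a = b
    · subst h
      rw [if_pos rfl, if_pos rfl, if_neg (hKne a)]
    · rw [if_neg (fun hc => h ((hKinj a b).1 hc)), if_neg h]
  have hval : ∀ a : Fin mK, (inner ℝ (A (ξ a)) (η a) : ℝ) = σ (eK a : Fin m) := by
    intro a
    set k : Fin m := (eK a : Fin m) with hk
    rw [hξ, hη]
    simp only
    rw [inner_apply_sum_dot χ A (v k) (u k), ← hγ]
    have hmv : γ *ᵥ v k = σ k • u k := by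
      rw [hrep (v k)]
      rw [Finset.sum_eq_single k]
      · rw [hvorth k k, if_pos rfl, mul_one]
      · intro l _ hlk
        rw [hvorth l k, if_neg hlk, mul_zero, zero_smul]
      · intro h; exact absurd (Finset.mem_univ k) h
    rw [hmv, dotProduct_smul, smul_eq_mul, huorth k k, if_pos rfl, if_neg (hKne a), mul_one]
  have hsum : ∑ k, σ k ^ (2 * n) = ∑ a : Fin mK, σ (eK a : Fin m) ^ (2 * n) := by
    have h1 : ∑ k, σ k ^ (2 * n) = ∑ k ∈ K, σ k ^ (2 * n) := by
      refine (Finset.sum_subset (Finset.filter_subset _ _) ?_).symm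
      intro k _ hk
      rw [Finset.mem_filter] at hk
      push_neg at hk
      have : σ k = 0 := hk (Finset.mem_univ k)
      rw [this, zero_pow (by omega)]
    rw [h1, ← Finset.sum_coe_sort K (fun k => σ k ^ (2 * n))]
    exact (Equiv.sum_comp eK (fun x : ↥K => σ (x : Fin m) ^ (2 * n))).symm
  rw [hsum]
  have := hA mK ξ η horthξ horthη
  calc ∑ a : Fin mK, σ (eK a : Fin m) ^ (2 * n)
      = ∑ a : Fin mK, |(inner ℝ (A (ξ a)) (η a) : ℝ)| ^ (2 * n) := by
        refine Finset.sum_congr rfl fun a _ => ?_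
        rw [hval a, abs_of_nonneg (hσ0 _)]
    _ ≤ C := this

/-- Main real inequality. -/
lemma main_real_bound {α : Type*} [MeasurableSpace α] {μ : Measure α} (n : ℕ) (hn : 1 ≤ n)
    (A B : Lp ℝ 2 μ →L[ℝ] Lp ℝ 2 μ)
    (hB : ∀ f : Lp ℝ 2 μ, 0 ≤ f → 0 ≤ B f)
    (hAB : ∀ f : Lp ℝ 2 μ, 0 ≤ f → 0 ≤ (A - B) f)
    (C : ℝ)
    (hA : ∀ (mK : ℕ) (ξ η : Fin mK → Lp ℝ 2 μ), Orthonormal ℝ ξ → Orthonormal ℝ η →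
      ∑ a, |(inner ℝ (A (ξ a)) (η a) : ℝ)| ^ (2 * n) ≤ C)
    (N : ℕ) (e f : Fin N → Lp ℝ 2 μ) (he : Orthonormal ℝ e) (hf : Orthonormal ℝ f) :
    ∑ i, |(inner ℝ (B (e i)) (f i) : ℝ)| ^ (2 * n) ≤ C := by
  classical
  set M : ℝ := ‖B‖ + 1 with hM
  have hM0 : 0 < M := by positivity
  have hM1 : ‖B‖ ≤ M := by rw [hM]; linarith
  refine le_of_forall_pos_le_add ?_
  intro ε hε
  set D : ℝ := N * (2 * n) * M ^ (2 * n - 1) * (2 * ‖B‖) with hD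
  have hD0 : 0 ≤ D := by positivity
  set ε' : ℝ := ε / (D + 1) with hε'def
  have hε'0 : 0 < ε' := by
    rw [hε'def]
    positivity
  -- approximate both families
  set v2 : Fin (N + N) → Lp ℝ 2 μ := fun j =>
    if h : (j : ℕ) < N then e ⟨j, h⟩ else f ⟨(j : ℕ) - N, by omega⟩ with hv2
  obtain ⟨m, χ, hχ, hχ0, happ⟩ := approx_by_nonneg_orthonormal (N + N) v2 hε'0
  have happ_e : ∀ i : Fin N, ∃ g ∈ Submodule.span ℝ (Set.range χ), ‖e i - g‖ ≤ ε' := by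
    intro i
    obtain ⟨g, hg1, hg2⟩ := happ ⟨(i : ℕ), by omega⟩
    refine ⟨g, hg1, ?_⟩
    have hveq : v2 ⟨(i : ℕ), by omega⟩ = e i := by
      rw [hv2]
      simp only
      rw [dif_pos i.isLt]
    rwa [hveq] at hg2
  have happ_f : ∀ i : Fin N, ∃ g ∈ Submodule.span ℝ (Set.range χ), ‖f i - g‖ ≤ ε' := by
    intro i
    obtain ⟨g, hg1, hg2⟩ := happ ⟨N + (i : ℕ), by omega⟩
    refine ⟨g, hg1, ?_⟩
    have hveq : v2 ⟨N + (i : ℕ), by omega⟩ = f i := by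
      rw [hv2]
      simp only
      rw [dif_neg (by omega)]
      congr 1
      exact Fin.ext (by simp)
    rwa [hveq] at hg2
  -- projections
  have herr_e : ∀ i, ‖e i - Qproj χ (e i)‖ ≤ ε' := by
    intro i
    obtain ⟨g, hg1, hg2⟩ := happ_e i
    exact (Qproj_min hχ (e i) hg1).trans hg2
  have herr_f : ∀ i, ‖f i - Qproj χ (f i)‖ ≤ ε' := by
    intro i
    obtain ⟨g, hg1, hg2⟩ := happ_f i
    exact (Qproj_min hχ (f i) hg1).trans hg2
  have hQe_norm : ∀ i, ‖Qproj χ (e i)‖ ≤ 1 := by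
    intro i
    refine (norm_Qproj_le hχ (e i)).trans ?_
    rw [he.1 i]
  have hQf_norm : ∀ i, ‖Qproj χ (f i)‖ ≤ 1 := by
    intro i
    refine (norm_Qproj_le hχ (f i)).trans ?_
    rw [hf.1 i]
  -- matrices
  set β : Matrix (Fin m) (Fin m) ℝ := Matrix.of fun j k => (inner ℝ (B (χ k)) (χ j) : ℝ) with hβ
  set γ : Matrix (Fin m) (Fin m) ℝ := Matrix.of fun j k => (inner ℝ (A (χ k)) (χ j) : ℝ) with hγ
  have hβ0 : ∀ j k, 0 ≤ β j k := by
    intro j k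
    exact Lp_inner_nonneg _ _ (hB (χ k) (hχ0 k)) (hχ0 j)
  have hβγ : ∀ j k, β j k ≤ γ j k := by
    intro j k
    have h1 : 0 ≤ (inner ℝ ((A - B) (χ k)) (χ j) : ℝ) :=
      Lp_inner_nonneg _ _ (hAB (χ k) (hχ0 k)) (hχ0 j)
    rw [ContinuousLinearMap.sub_apply, inner_sub_left] at h1
    have : β j k = (inner ℝ (B (χ k)) (χ j) : ℝ) := rfl
    have hγjk : γ j k = (inner ℝ (A (χ k)) (χ j) : ℝ) := rfl
    rw [this, hγjk]
    linarith
  set x : Fin N → (Fin m → ℝ) := fun i j => (inner ℝ (χ j) (e i) : ℝ) with hx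
  set y : Fin N → (Fin m → ℝ) := fun i j => (inner ℝ (χ j) (f i) : ℝ) with hy
  have hxB : ∀ w : Fin m → ℝ, ∑ i, (x i ⬝ᵥ w) ^ 2 ≤ w ⬝ᵥ w := fun w => bessel_coords hχ he w
  have hyB : ∀ w : Fin m → ℝ, ∑ i, (y i ⬝ᵥ w) ^ 2 ≤ w ⬝ᵥ w := fun w => bessel_coords hχ hf w
  have hmain : ∑ i, |y i ⬝ᵥ (β *ᵥ x i)| ^ (2 * n) ≤ C := by
    calc ∑ i, |y i ⬝ᵥ (β *ᵥ x i)| ^ (2 * n) ≤ ((βᴴ * β) ^ n).trace :=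
          core_matrix hn β x y hxB hyB
      _ ≤ ((γᴴ * γ) ^ n).trace := trace_pow_mono β γ hβ0 hβγ n
      _ ≤ C := trace_le_C n hn A hχ C hA
  -- error control per index
  have hident : ∀ i, (inner ℝ (B (Qproj χ (e i))) (Qproj χ (f i)) : ℝ) = y i ⬝ᵥ (β *ᵥ x i) :=
    fun i => inner_Qproj_eq_dot hχ B (e i) (f i)
  have hperi : ∀ i, |(inner ℝ (B (e i)) (f i) : ℝ)| ^ (2 * n)
      ≤ |(inner ℝ (B (Qproj χ (e i))) (Qproj χ (f i)) : ℝ)| ^ (2 * n)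
        + (2 * n) * M ^ (2 * n - 1) * (2 * ‖B‖ * ε') := by
    intro i
    set t : ℝ := |(inner ℝ (B (e i)) (f i) : ℝ)| with hts
    set t' : ℝ := |(inner ℝ (B (Qproj χ (e i))) (Qproj χ (f i)) : ℝ)| with hts'
    have hdiff : |(inner ℝ (B (e i)) (f i) : ℝ)
        - (inner ℝ (B (Qproj χ (e i))) (Qproj χ (f i)) : ℝ)| ≤ 2 * ‖B‖ * ε' := by
      have hid : (inner ℝ (B (e i)) (f i) : ℝ)
          - (inner ℝ (B (Qproj χ (e i))) (Qproj χ (f i)) : ℝ)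
          = (inner ℝ (B (e i - Qproj χ (e i))) (f i) : ℝ)
            + (inner ℝ (B (Qproj χ (e i))) (f i - Qproj χ (f i)) : ℝ) := by
        rw [map_sub, inner_sub_left, inner_sub_right]
        ring
      rw [hid]
      have h1 : |(inner ℝ (B (e i - Qproj χ (e i))) (f i) : ℝ)| ≤ ‖B‖ * ε' := by
        refine (abs_real_inner_le_norm _ _).trans ?_
        calc ‖B (e i - Qproj χ (e i))‖ * ‖f i‖ ≤ (‖B‖ * ‖e i - Qproj χ (e i)‖) * 1 := by
              refine mul_le_mul (B.le_opNorm _) (le_of_eq (hf.1 i)) (norm_nonneg _) (by positivity)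
          _ ≤ ‖B‖ * ε' := by
              rw [mul_one]
              exact mul_le_mul_of_nonneg_left (herr_e i) (norm_nonneg B)
      have h2 : |(inner ℝ (B (Qproj χ (e i))) (f i - Qproj χ (f i)) : ℝ)| ≤ ‖B‖ * ε' := by
        refine (abs_real_inner_le_norm _ _).trans ?_
        calc ‖B (Qproj χ (e i))‖ * ‖f i - Qproj χ (f i)‖
            ≤ (‖B‖ * 1) * ε' := by
              refine mul_le_mul ?_ (herr_f i) (norm_nonneg _) (by positivity)
              calc ‖B (Qproj χ (e i))‖ ≤ ‖B‖ * ‖Qproj χ (e i)‖ := B.le_opNorm _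
                _ ≤ ‖B‖ * 1 := mul_le_mul_of_nonneg_left (hQe_norm i) (norm_nonneg B)
          _ = ‖B‖ * ε' := by ring
      calc |(inner ℝ (B (e i - Qproj χ (e i))) (f i) : ℝ)
            + (inner ℝ (B (Qproj χ (e i))) (f i - Qproj χ (f i)) : ℝ)|
          ≤ |(inner ℝ (B (e i - Qproj χ (e i))) (f i) : ℝ)|
            + |(inner ℝ (B (Qproj χ (e i))) (f i - Qproj χ (f i)) : ℝ)| := abs_add_le _ _
        _ ≤ ‖B‖ * ε' + ‖B‖ * ε' := add_le_add h1 h2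
        _ = 2 * ‖B‖ * ε' := by ring
    have htM : t ≤ M := by
      rw [hts]
      refine (abs_real_inner_le_norm _ _).trans ?_
      calc ‖B (e i)‖ * ‖f i‖ ≤ (‖B‖ * ‖e i‖) * 1 :=
            mul_le_mul (B.le_opNorm _) (le_of_eq (hf.1 i)) (norm_nonneg _) (by positivity)
        _ = ‖B‖ := by rw [he.1 i]; ring
        _ ≤ M := hM1
    rcases le_or_gt t t' with hcase | hcase
    · calc t ^ (2 * n) ≤ t' ^ (2 * n) := pow_le_pow_left₀ (abs_nonneg _) hcase _
        _ ≤ t' ^ (2 * n) + (2 * n) * M ^ (2 * n - 1) * (2 * ‖B‖ * ε') := by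
            have : (0:ℝ) ≤ (2 * n) * M ^ (2 * n - 1) * (2 * ‖B‖ * ε') := by positivity
            linarith
    · have hkey := pow_le_pow_add_lin (abs_nonneg _) hcase.le htM (2 * n)
      push_cast at hkey
      have htt' : t - t' ≤ 2 * ‖B‖ * ε' := by
        calc t - t' ≤ |t - t'| := le_abs_self _
          _ ≤ |(inner ℝ (B (e i)) (f i) : ℝ)
              - (inner ℝ (B (Qproj χ (e i))) (Qproj χ (f i)) : ℝ)| := by
              rw [hts, hts']
              exact abs_abs_sub_abs_le_abs_sub _ _
          _ ≤ 2 * ‖B‖ * ε' := hdiff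
      calc t ^ (2*n) ≤ t' ^ (2*n) + (2*n) * M ^ (2*n-1) * (t - t') := hkey
        _ ≤ t' ^ (2*n) + (2*n) * M ^ (2*n-1) * (2 * ‖B‖ * ε') := by
            have h0 : (0:ℝ) ≤ (2*n : ℝ) * M ^ (2*n-1) := by positivity
            have := mul_le_mul_of_nonneg_left htt' h0
            linarith
  -- assemble
  calc ∑ i, |(inner ℝ (B (e i)) (f i) : ℝ)| ^ (2 * n)
      ≤ ∑ i, (|(inner ℝ (B (Qproj χ (e i))) (Qproj χ (f i)) : ℝ)| ^ (2 * n)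
          + (2 * n) * M ^ (2 * n - 1) * (2 * ‖B‖ * ε')) :=
        Finset.sum_le_sum fun i _ => hperi i
    _ = ∑ i, |(inner ℝ (B (Qproj χ (e i))) (Qproj χ (f i)) : ℝ)| ^ (2 * n)
          + N * ((2 * n) * M ^ (2 * n - 1) * (2 * ‖B‖ * ε')) := by
        rw [Finset.sum_add_distrib, Finset.sum_const, Finset.card_univ, Fintype.card_fin]
        ring_nf
    _ ≤ C + N * ((2 * n) * M ^ (2 * n - 1) * (2 * ‖B‖ * ε')) := by
        have hsum2 : ∑ i, |(inner ℝ (B (Qproj χ (e i))) (Qproj χ (f i)) : ℝ)| ^ (2 * n) ≤ C := by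
          calc ∑ i, |(inner ℝ (B (Qproj χ (e i))) (Qproj χ (f i)) : ℝ)| ^ (2 * n)
              = ∑ i, |y i ⬝ᵥ (β *ᵥ x i)| ^ (2 * n) := by
                refine Finset.sum_congr rfl fun i _ => ?_
                rw [hident i]
            _ ≤ C := hmain
        linarith
    _ ≤ C + ε := by
        have harr : (N : ℝ) * ((2 * n) * M ^ (2 * n - 1) * (2 * ‖B‖ * ε')) = D * ε' := by
          rw [hD]; ring
        rw [harr]
        have : D * ε' ≤ ε := by
          rw [hε'def]
          rw [div_eq_inv_mul, ← mul_assoc]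
          have hD1 : 0 < D + 1 := by linarith
          rw [mul_comm D (D+1)⁻¹, mul_assoc]
          calc (D + 1)⁻¹ * (D * ε) ≤ (D + 1)⁻¹ * ((D + 1) * ε) := by
                refine mul_le_mul_of_nonneg_left ?_ (by positivity)
                refine mul_le_mul_of_nonneg_right (by linarith) hε.le
            _ = ε := by field_simp
        linarith

end MainReal


/-- The Schatten `p`-norm of a bounded operator on a Hilbert space, defined via the
well-known characterization (valid for `p ≥ 1`)
`‖T‖_p^p = sup { ∑ᵢ |⟨T eᵢ, fᵢ⟩|^p : (eᵢ), (fᵢ) finite orthonormal families }`. -/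
noncomputable def schattenNorm (𝕜 : Type*) [RCLike 𝕜] {H : Type*} [NormedAddCommGroup H]
    [InnerProductSpace 𝕜 H] (p : ℝ) (T : H →L[𝕜] H) : ℝ≥0∞ :=
  (⨆ (n : ℕ) (e : Fin n → H) (f : Fin n → H) (_ : Orthonormal 𝕜 e) (_ : Orthonormal 𝕜 f),
    ∑ i : Fin n, (‖(inner 𝕜 (T (e i)) (f i) : 𝕜)‖₊ : ℝ≥0∞) ^ p) ^ (1 / p)

/-- If `0 ≼ B ≼ A` in the positivity preserving ordering and `A ∈ 𝓑_{2n}(L²(M; dμ))`,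
then `B ∈ 𝓑_{2n}(L²(M; dμ))` and `‖B‖_{𝓑_{2n}} ≤ ‖A‖_{𝓑_{2n}}`. -/
theorem stmt_7 {α : Type*} [MeasurableSpace α] {μ : Measure α} [SigmaFinite μ]
    (n : ℕ) (hn : 1 ≤ n)
    (A B : Lp ℝ 2 μ →L[ℝ] Lp ℝ 2 μ)
    (hB : ∀ f : Lp ℝ 2 μ, 0 ≤ f → 0 ≤ B f)
    (hAB : ∀ f : Lp ℝ 2 μ, 0 ≤ f → 0 ≤ (A - B) f)
    (hA : schattenNorm ℝ (2 * (n : ℝ)) A ≠ ⊤) :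
    schattenNorm ℝ (2 * (n : ℝ)) B ≠ ⊤ ∧
      schattenNorm ℝ (2 * (n : ℝ)) B ≤ schattenNorm ℝ (2 * (n : ℝ)) A := by
  classical
  have hn1 : (1:ℝ) ≤ (n:ℝ) := by exact_mod_cast hn
  have hinv0 : (0:ℝ) < 1 / (2 * (n:ℝ)) := by positivity
  unfold schattenNorm at hA ⊢
  set SA : ℝ≥0∞ := ⨆ (N : ℕ) (e : Fin N → Lp ℝ 2 μ) (f : Fin N → Lp ℝ 2 μ)
      (_ : Orthonormal ℝ e) (_ : Orthonormal ℝ f),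
      ∑ i, ((‖(inner ℝ (A (e i)) (f i) : ℝ)‖₊ : ℝ≥0∞) ^ (2 * (n:ℝ))) with hSAdef
  set SB : ℝ≥0∞ := ⨆ (N : ℕ) (e : Fin N → Lp ℝ 2 μ) (f : Fin N → Lp ℝ 2 μ)
      (_ : Orthonormal ℝ e) (_ : Orthonormal ℝ f),
      ∑ i, ((‖(inner ℝ (B (e i)) (f i) : ℝ)‖₊ : ℝ≥0∞) ^ (2 * (n:ℝ))) with hSBdef
  have hSAtop : SA ≠ ⊤ := by
    intro h
    rw [h] at hA
    exact hA (ENNReal.top_rpow_of_pos hinv0)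
  have hA_real : ∀ (mK : ℕ) (ξ η : Fin mK → Lp ℝ 2 μ), Orthonormal ℝ ξ → Orthonormal ℝ η →
      ∑ a, |(inner ℝ (A (ξ a)) (η a) : ℝ)| ^ (2 * n) ≤ SA.toReal := by
    intro mK ξ η hξ hη
    have hle : (∑ a, ((‖(inner ℝ (A (ξ a)) (η a) : ℝ)‖₊ : ℝ≥0∞) ^ (2 * (n:ℝ)))) ≤ SA := by
      rw [hSAdef]
      refine le_iSup_of_le mK (le_iSup_of_le ξ (le_iSup_of_le η (le_iSup_of_le hξ
        (le_iSup_of_le hη le_rfl))))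
    rw [body_eq_coe n] at hle
    have h2 := ENNReal.toReal_mono hSAtop hle
    rw [ENNReal.coe_toReal] at h2
    calc ∑ a, |(inner ℝ (A (ξ a)) (η a) : ℝ)| ^ (2 * n)
        = ((∑ a, ‖(inner ℝ (A (ξ a)) (η a) : ℝ)‖₊ ^ (2 * n) : NNReal) : ℝ) := by
          rw [NNReal.coe_sum]
          refine (Finset.sum_congr rfl fun a _ => ?_).symm
          rw [NNReal.coe_pow, coe_nnnorm, Real.norm_eq_abs]
      _ ≤ SA.toReal := h2
  have hcore : SB ≤ SA := by
    rw [hSBdef]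
    refine iSup_le fun N => iSup_le fun e => iSup_le fun f =>
      iSup_le fun he => iSup_le fun hf => ?_
    have hreal := main_real_bound n hn A B hB hAB SA.toReal hA_real N e f he hf
    rw [body_eq_coe n]
    rw [← ENNReal.ofReal_toReal hSAtop, ← ENNReal.ofReal_coe_nnreal]
    refine ENNReal.ofReal_le_ofReal ?_
    calc ((∑ i, ‖(inner ℝ (B (e i)) (f i) : ℝ)‖₊ ^ (2 * n) : NNReal) : ℝ)
        = ∑ i, |(inner ℝ (B (e i)) (f i) : ℝ)| ^ (2 * n) := by
          rw [NNReal.coe_sum]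
          refine Finset.sum_congr rfl fun i _ => ?_
          rw [NNReal.coe_pow, coe_nnnorm, Real.norm_eq_abs]
      _ ≤ SA.toReal := hreal
  constructor
  · have hSBtop : SB ≠ ⊤ := ne_top_of_le_ne_top hSAtop hcore
    exact ENNReal.rpow_ne_top_of_nonneg hinv0.le hSBtop
  · exact ENNReal.rpow_le_rpow hcore hinv0.le
end

section
/- Let 𝓥 be a reflexive Banach space, 𝓦 a Banach space, K : 𝓥 → 𝓥* a compact linear operator, and T : 𝓥 → 𝓦 a bounded injective linear operator. Then for every ε > 0 there exists C_ε > 0 such that |⟨u, K u⟩_{𝓥,𝓥*}| ≤ ε ‖u‖_𝓥² + C_ε ‖T u‖_𝓦² for all u ∈ 𝓥. -/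
open Filter Topology Metric NormedSpace

/-- Auxiliary: a cluster point of a convergent real sequence equals the limit. -/
private lemma cluster_eq_of_tendsto {α : Type*} {s : α → ℝ} {F : Filter α} [F.NeBot] {a b : ℝ}
    (h : Filter.Tendsto s F (𝓝 a)) (hb : MapClusterPt b F s) : b = a := by
  have h1 : (𝓝 b ⊓ Filter.map s F).NeBot := hb
  have h2 : 𝓝 b ⊓ Filter.map s F ≤ 𝓝 b ⊓ 𝓝 a := inf_le_inf_left _ h
  exact eq_of_nhds_neBot (Filter.neBot_of_le h2)

set_option maxHeartbeats 1000000 in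
/-- If `𝓥` is a reflexive Banach space, `K : 𝓥 → 𝓥*` a compact operator, and
`T : 𝓥 → 𝓦` a bounded injective operator, then for every `ε > 0` there is `C_ε > 0`
with `|⟨u, K u⟩| ≤ ε ‖u‖² + C_ε ‖T u‖²` for all `u ∈ 𝓥`. -/
theorem stmt_15 {V W : Type*} [NormedAddCommGroup V] [NormedSpace ℝ V] [CompleteSpace V]
    [NormedAddCommGroup W] [NormedSpace ℝ W]
    (hrefl : Function.Surjective (NormedSpace.inclusionInDoubleDual ℝ V))
    (K : V →L[ℝ] StrongDual ℝ V) (hK : IsCompactOperator K)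
    (T : V →L[ℝ] W) (hT : Function.Injective T) :
    ∀ ε > 0, ∃ C > 0, ∀ u : V, |K u u| ≤ ε * ‖u‖ ^ 2 + C * ‖T u‖ ^ 2 := by
  intro ε hε
  by_contra hcon
  push_neg at hcon
  -- extract a normalized sequence
  have hseq : ∀ n : ℕ, ∃ v : V, ‖v‖ = 1 ∧ ((n : ℝ) + 1) * ‖T v‖ ^ 2 ≤ ‖K‖ ∧ ε < |K v v| := by
    intro n
    obtain ⟨u, hu⟩ := hcon ((n : ℝ) + 1) (by positivity)
    have hu0 : u ≠ 0 := by
      rintro rfl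
      simp at hu
    have hn : (0 : ℝ) < ‖u‖ := norm_pos_iff.mpr hu0
    have hn2 : (0 : ℝ) < ‖u‖ ^ 2 := by positivity
    have hv1' : ‖(‖u‖⁻¹ • u)‖ = 1 := by
      rw [norm_smul, norm_inv, norm_norm, inv_mul_cancel₀ (ne_of_gt hn)]
    have hKvv : K (‖u‖⁻¹ • u) (‖u‖⁻¹ • u) = ‖u‖⁻¹ * (‖u‖⁻¹ * K u u) := by
      simp [map_smul, smul_eq_mul]
    have hTv2 : ‖T (‖u‖⁻¹ • u)‖ ^ 2 = ‖T u‖ ^ 2 / ‖u‖ ^ 2 := by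
      rw [map_smul, norm_smul, norm_inv, norm_norm]
      field_simp
    have habs : |K (‖u‖⁻¹ • u) (‖u‖⁻¹ • u)| = |K u u| / ‖u‖ ^ 2 := by
      rw [hKvv, abs_mul, abs_mul, abs_of_pos (inv_pos.mpr hn), div_eq_mul_inv, ← inv_pow]
      ring
    have hop : |K (‖u‖⁻¹ • u) (‖u‖⁻¹ • u)| ≤ ‖K‖ := by
      have h1 : ‖K (‖u‖⁻¹ • u) (‖u‖⁻¹ • u)‖ ≤ ‖K (‖u‖⁻¹ • u)‖ * ‖(‖u‖⁻¹ • u)‖ :=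
        (K (‖u‖⁻¹ • u)).le_opNorm _
      have h2 : ‖K (‖u‖⁻¹ • u)‖ ≤ ‖K‖ * ‖(‖u‖⁻¹ • u)‖ := K.le_opNorm _
      rw [hv1'] at h1 h2
      rw [← Real.norm_eq_abs]
      nlinarith
    have key : ε + ((n : ℝ) + 1) * ‖T (‖u‖⁻¹ • u)‖ ^ 2 <
        |K (‖u‖⁻¹ • u) (‖u‖⁻¹ • u)| := by
      rw [hTv2, habs]
      rw [show ε + ((n : ℝ) + 1) * (‖T u‖ ^ 2 / ‖u‖ ^ 2)
          = (ε * ‖u‖ ^ 2 + ((n : ℝ) + 1) * ‖T u‖ ^ 2) / ‖u‖ ^ 2 by field_simp]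
      exact (div_lt_div_iff_of_pos_right hn2).mpr hu
    refine ⟨‖u‖⁻¹ • u, hv1', ?_, ?_⟩
    · nlinarith [key, hop]
    · have hnn : (0 : ℝ) ≤ ((n : ℝ) + 1) * ‖T (‖u‖⁻¹ • u)‖ ^ 2 := by positivity
      linarith [key]
  choose v hv1 hv2 hv3 using hseq
  -- T (v n) → 0
  have hTv0 : Filter.Tendsto (fun n => T (v n)) Filter.atTop (𝓝 0) := by
    rw [tendsto_zero_iff_norm_tendsto_zero]
    have hsq : Filter.Tendsto (fun n : ℕ => ‖T (v n)‖ ^ 2) Filter.atTop (𝓝 0) := by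
      apply squeeze_zero (g := fun n : ℕ => ‖K‖ / ((n : ℝ) + 1)) (fun n => sq_nonneg _) ?_ ?_
      · intro n
        have hpos : (0 : ℝ) < (n : ℝ) + 1 := by positivity
        rw [le_div_iff₀ hpos]
        nlinarith [hv2 n]
      · have h1 : Filter.Tendsto (fun n : ℕ => ‖K‖ / (n : ℝ)) Filter.atTop (𝓝 0) :=
          tendsto_const_div_atTop_nhds_zero_nat ‖K‖
        have h2 := h1.comp (Filter.tendsto_add_atTop_nat 1)
        convert h2 using 2 with n
        simp [Function.comp]
    have heq : (fun n : ℕ => ‖T (v n)‖) = fun n : ℕ => Real.sqrt (‖T (v n)‖ ^ 2) := by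
      funext n
      rw [Real.sqrt_sq (norm_nonneg _)]
    rw [heq]
    have h5 := (Real.continuous_sqrt.tendsto 0).comp hsq
    rw [Real.sqrt_zero] at h5
    exact h5
  -- compactness: extract subsequence with K (v (φ n)) → w
  have hKc : IsCompact (closure (⇑K '' Metric.closedBall 0 1)) :=
    IsCompactOperator.isCompact_closure_image_closedBall (𝕜₁ := ℝ)
      (f := (K : V →L[ℝ] StrongDual ℝ V).toLinearMap) hK 1
  obtain ⟨w, -, φ, hφmono, hφ⟩ := hKc.tendsto_subseq
      (x := fun n => K (v n)) (fun n => subset_closure ⟨v n, by simp [hv1 n], rfl⟩)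
  -- Banach-Alaoglu: cluster point of the double-dual images
  set J : V → WeakDual ℝ (StrongDual ℝ V) :=
    fun x => StrongDual.toWeakDual (inclusionInDoubleDual ℝ V x) with hJ
  have hmem : ∀ n : ℕ, J (v (φ n)) ∈
      WeakDual.toStrongDual ⁻¹' Metric.closedBall (0 : StrongDual ℝ (StrongDual ℝ V)) 1 := by
    intro n
    simp only [Set.mem_preimage, Metric.mem_closedBall, dist_zero_right]
    have := double_dual_bound ℝ V (v (φ n))
    rw [hv1 (φ n)] at this
    exact (dist_zero_right (WeakDual.toStrongDual (J (v (φ n))))).le.trans (by exact this)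
  have hcpt := WeakDual.isCompact_closedBall (𝕜 := ℝ) (E := StrongDual ℝ V) 0 1
  obtain ⟨x, -, hx⟩ := hcpt.exists_clusterPt (f := Filter.map (fun n => J (v (φ n))) Filter.atTop)
    (by rw [Filter.le_principal_iff, Filter.mem_map]
        exact Filter.Eventually.of_forall hmem)
  have hxcl : MapClusterPt x Filter.atTop (fun n => J (v (φ n))) := hx
  -- reflexivity: x = J u
  obtain ⟨u, hu⟩ := hrefl (WeakDual.toStrongDual x)
  have hxapp : ∀ f : StrongDual ℝ V, x f = f u := by
    intro f
    have : inclusionInDoubleDual ℝ V u f = WeakDual.toStrongDual x f := by rw [hu]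
    rw [NormedSpace.dual_def] at this
    exact this.symm
  -- T u = 0, hence u = 0
  have hu0 : u = 0 := by
    have hTu : T u = 0 := by
      apply NormedSpace.eq_zero_of_forall_dual_eq_zero ℝ
      intro f
      have hcl : MapClusterPt (x (f ∘L T)) Filter.atTop
          (fun n => (J (v (φ n))) (f ∘L T)) :=
        hxcl.continuousAt_comp ((WeakDual.eval_continuous (f ∘L T)).continuousAt)
      have hcl2 : MapClusterPt (x (f ∘L T)) Filter.atTop
          (fun n => (f ∘L T) (v (φ n))) := by
        convert hcl using 2 with n
        rfl
      have htend : Filter.Tendsto (fun n => (f ∘L T) (v (φ n))) Filter.atTop (𝓝 0) := by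
        have h1 : Filter.Tendsto (fun n => T (v (φ n))) Filter.atTop (𝓝 0) :=
          hTv0.comp hφmono.tendsto_atTop
        have := (f.continuous.tendsto 0).comp h1
        rw [map_zero] at this
        exact this
      have := cluster_eq_of_tendsto htend hcl2
      rw [hxapp (f ∘L T)] at this
      simpa using this
    exact hT (by rw [hTu, map_zero])
  -- cluster of w (v (φ n)) at x w = w u = 0
  have hwcl : MapClusterPt (0 : ℝ) Filter.atTop (fun n => w (v (φ n))) := by
    have hcl : MapClusterPt (x w) Filter.atTop (fun n => (J (v (φ n))) w) :=
      hxcl.continuousAt_comp ((WeakDual.eval_continuous w).continuousAt)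
    have hx0 : x w = 0 := by rw [hxapp w, hu0, map_zero]
    rw [hx0] at hcl
    convert hcl using 2 with n
    rfl
  -- but eventually |w (v (φ n))| ≥ ε/2, contradiction
  have hev : ∀ᶠ n in Filter.atTop, ε / 2 ≤ |w (v (φ n))| := by
    have hev1 : ∀ᶠ n in Filter.atTop, ‖K (v (φ n)) - w‖ < ε / 2 := by
      obtain ⟨N, hN⟩ := Metric.tendsto_atTop.mp hφ (ε / 2) (by linarith)
      filter_upwards [Filter.eventually_ge_atTop N] with n hn
      have := hN n hn
      rwa [dist_eq_norm] at this
    filter_upwards [hev1] with n hn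
    have h1 : ε < |K (v (φ n)) (v (φ n))| := hv3 (φ n)
    have h2 : |K (v (φ n)) (v (φ n)) - w (v (φ n))| ≤ ‖K (v (φ n)) - w‖ := by
      have h3 : ‖(K (v (φ n)) - w) (v (φ n))‖ ≤ ‖K (v (φ n)) - w‖ * ‖v (φ n)‖ :=
        (K (v (φ n)) - w).le_opNorm _
      rw [hv1 (φ n), mul_one] at h3
      simpa [Real.norm_eq_abs] using h3
    have := abs_sub_abs_le_abs_sub (K (v (φ n)) (v (φ n))) (w (v (φ n)))
    linarith
  have hfreq : ∃ᶠ n in Filter.atTop, |w (v (φ n))| < ε / 2 := by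
    have := mapClusterPt_iff_frequently.mp hwcl (Metric.ball 0 (ε / 2)) (Metric.ball_mem_nhds 0 (by linarith))
    apply this.mono
    intro n hn
    simpa [Real.norm_eq_abs] using hn
  obtain ⟨n, hn1, hn2⟩ := (hfreq.and_eventually hev).exists
  linarith
end
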